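/- Let ℓ ≥ 2 and let p = (a_1,...,a_ℓ,b_1,...,b_ℓ) be a position of NN(2ℓ, ℓ) satisfying b_1 < a_2 and a_{i+1} ≤ b_i for all i = 2,...,ℓ-1. Then s* = b_1 + a_3 + a_4 + ... + a_ℓ, and consequently p lies in S_ℓ if and only if A = B and min(a_1, b_ℓ) = b_1 + a_3 + a_4 + ... + a_ℓ. -/

import Mathlib

/-- Window sum `s i = p i + p (i+1) + ... + p (i+ℓ-2)` for the game NN(2ℓ, ℓ). -/
def window (ℓ : ℕ) (p : ℕ → ℕ) (i : ℕ) : ℕ := ∑ j ∈ Finset.Icc i (i + ℓ - 2), p j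

/-- `s* = min` of the window sums `s i` over `i = 2, ..., ℓ+1` for NN(2ℓ, ℓ). -/
noncomputable def sstar (ℓ : ℕ) (p : ℕ → ℕ) : ℕ :=
  sInf {x | ∃ i, 2 ≤ i ∧ i ≤ ℓ + 1 ∧ x = window ℓ p i}

/-- The set `S_ℓ` for NN(2ℓ, ℓ): the sum equation (SE) `A = B` and the
minimum equation (ME) `m = s*`. -/
def memS (ℓ : ℕ) (p : ℕ → ℕ) : Prop :=
  (∑ i ∈ Finset.Icc 1 ℓ, p i) = (∑ i ∈ Finset.Icc (ℓ + 1) (2 * ℓ), p i) ∧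
  min (p 1) (p (2 * ℓ)) = sstar ℓ p

lemma win_shift (ℓ i : ℕ) (hℓ : 2 ≤ ℓ) (p : ℕ → ℕ) :
    window ℓ p i + p (i + ℓ - 1) = window ℓ p (i + 1) + p i := by
  obtain ⟨k, rfl⟩ : ∃ k, ℓ = k + 2 := ⟨ℓ - 2, by omega⟩
  unfold window
  have e1 : i + (k + 2) - 2 = i + k := by omega
  have e2 : i + (k + 2) - 1 = i + k + 1 := by omega
  have e3 : i + 1 + (k + 2) - 2 = i + k + 1 := by omega
  rw [e1, e2, e3]
  rw [← Finset.sum_Icc_succ_top (show i ≤ i + k + 1 by omega),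
    ← Finset.insert_Icc_add_one_left_eq_Icc (show i ≤ i + k + 1 by omega),
    Finset.sum_insert (by simp)]
  ring

/-- For ℓ ≥ 2 and a position p of NN(2ℓ, ℓ) with b_1 < a_2
(i.e. p (ℓ+1) < p 2) and a_{i+1} ≤ b_i for i = 2,...,ℓ-1 (i.e.
p (i+1) ≤ p (ℓ+i)), we have s* = b_1 + a_3 + ... + a_ℓ, and consequently
p ∈ S_ℓ iff A = B and min(a_1, b_ℓ) = b_1 + a_3 + ... + a_ℓ. -/
theorem subspace_a3_to_b1 (ℓ : ℕ) (hℓ : 2 ≤ ℓ) (p : ℕ → ℕ)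
    (h1 : p (ℓ + 1) < p 2)
    (h : ∀ i, 2 ≤ i → i ≤ ℓ - 1 → p (i + 1) ≤ p (ℓ + i)) :
    sstar ℓ p = p (ℓ + 1) + (∑ i ∈ Finset.Icc 3 ℓ, p i) ∧
    (memS ℓ p ↔
      ((∑ i ∈ Finset.Icc 1 ℓ, p i) = (∑ i ∈ Finset.Icc (ℓ + 1) (2 * ℓ), p i) ∧
       min (p 1) (p (2 * ℓ)) = p (ℓ + 1) + (∑ i ∈ Finset.Icc 3 ℓ, p i))) := by
  have step : ∀ i, 3 ≤ i → i ≤ ℓ → window ℓ p i ≤ window ℓ p (i + 1) := by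
    intro i h3 hi
    have hp : p i ≤ p (i + ℓ - 1) := by
      have := h (i - 1) (by omega) (by omega)
      have e1 : i - 1 + 1 = i := by omega
      have e2 : ℓ + (i - 1) = i + ℓ - 1 := by omega
      rwa [e1, e2] at this
    have := win_shift ℓ i hℓ p
    omega
  have key : ∀ k, 3 + k ≤ ℓ + 1 → window ℓ p 3 ≤ window ℓ p (3 + k) := by
    intro k
    induction k with
    | zero => intro _; exact le_refl _
    | succ n ih =>
      intro hk
      have hs := step (3 + n) (by omega) (by omega)
      have hi := ih (by omega)
      have e : 3 + (n + 1) = 3 + n + 1 := by omega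
      rw [e]
      omega
  have bound : ∀ i, 2 ≤ i → i ≤ ℓ + 1 → window ℓ p 3 ≤ window ℓ p i := by
    intro i h2 hi
    rcases eq_or_lt_of_le h2 with h2 | h2
    · have := win_shift ℓ 2 hℓ p
      have e : 2 + ℓ - 1 = ℓ + 1 := by omega
      rw [e, show (2:ℕ) + 1 = 3 from rfl] at this
      subst h2
      omega
    · have := key (i - 3) (by omega)
      have e : 3 + (i - 3) = i := by omega
      rwa [e] at this
  have hw3 : window ℓ p 3 = p (ℓ + 1) + ∑ i ∈ Finset.Icc 3 ℓ, p i := by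
    unfold window
    have e : 3 + ℓ - 2 = ℓ + 1 := by omega
    rw [e, Finset.sum_Icc_succ_top (show 3 ≤ ℓ + 1 by omega)]
    ring
  have hmem : window ℓ p 3 ∈ {x | ∃ i, 2 ≤ i ∧ i ≤ ℓ + 1 ∧ x = window ℓ p i} :=
    ⟨3, by omega, by omega, rfl⟩
  have hs : sstar ℓ p = window ℓ p 3 := by
    apply le_antisymm (Nat.sInf_le hmem)
    apply le_csInf ⟨_, hmem⟩
    rintro x ⟨i, h2, hi, rfl⟩
    exact bound i h2 hi
  refine ⟨hs.trans hw3, ?_⟩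
  unfold memS
  rw [hs, hw3]
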